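/- arXiv:2010.09461 — 8 statements merged into one kernel-verified Lean document; each statement's English description precedes it below -/
import Mathlib

section
/- If a learner h is globally target-cautious (i.e., on every text T, no hypothesis of h on an initial segment of T enumerates a proper superset of the content of T) and h behaviourally correctly learns a class of languages L from text in the Gold-style (full-information) setting, then every language in L is finite. -/
open scoped Classical

/-- `W e` is the `e`-th computably enumerable set (the domain of the `e`-th
partial computable function in the standard numbering). -/
def W (e : ℕ) : Set ℕ :=
  {x | ((Denumerable.ofNat Nat.Partrec.Code e).eval x).Dom}

/-- A text: a total function from ℕ to ℕ ∪ {#}; `none` is the pause symbol `#`. -/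
abbrev Text := ℕ → Option ℕ

/-- The content of a text: all non-pause symbols occurring in it. -/
def content (T : Text) : Set ℕ := {x | ∃ n, T n = some x}

/-- `seg T n` is the initial segment `T[n]` of length `n`. -/
def seg (T : Text) (n : ℕ) : List (Option ℕ) := (List.range n).map T

/-- The content of a finite sequence. -/
def lcontent (σ : List (Option ℕ)) : Set ℕ := {x | some x ∈ σ}

/-- The content of a finite sequence, as a finite set. -/
def fcontent (σ : List (Option ℕ)) : Finset ℕ := (σ.filterMap id).toFinset

/-- `T` is a text of the language `L`. -/
def IsTextOf (T : Text) (L : Set ℕ) : Prop := content T = L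

/-- Gold-style behaviourally correct (Bc) learning of `L` from every text of `L`. -/
def GBc (h : List (Option ℕ) → ℕ) (L : Set ℕ) : Prop :=
  ∀ T : Text, IsTextOf T L → ∃ n0 : ℕ, ∀ n ≥ n0, W (h (seg T n)) = L

/-- A globally target-cautious Gold-style Bc-learner learns only finite languages. -/
theorem globally_target_cautious_GBc_only_finite
    (h : List (Option ℕ) → ℕ) (𝓛 : Set (Set ℕ))
    (hcaut : ∀ T : Text, ∀ n : ℕ, ¬ content T ⊂ W (h (seg T n)))
    (hlearn : ∀ L ∈ 𝓛, GBc h L) :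
    ∀ L ∈ 𝓛, L.Finite := by
  intro L hL
  by_contra hinf
  rw [← Set.Infinite] at hinf
  -- build a text of L
  obtain ⟨f, hf⟩ := (Set.countable_iff_exists_surjective hinf.nonempty).mp
    (Set.to_countable L)
  set T : Text := fun n => some (f n) with hT
  have hcT : content T = L := by
    ext x
    constructor
    · rintro ⟨n, hn⟩
      simp only [hT, Option.some.injEq] at hn
      exact hn ▸ (f n).2
    · intro hx
      obtain ⟨n, hn⟩ := hf ⟨x, hx⟩
      exact ⟨n, by simp [hT, hn]⟩
  obtain ⟨n0, hn0⟩ := hlearn L hL T hcT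
  have hW : W (h (seg T n0)) = L := hn0 n0 le_rfl
  set T' : Text := fun m => if m < n0 then T m else none with hT'
  have hseg : seg T' n0 = seg T n0 := by
    apply List.map_congr_left
    intro m hm
    simp only [hT', if_pos (List.mem_range.mp hm)]
  have hcT' : content T' = (fun m => (f m : ℕ)) '' Set.Iio n0 := by
    ext x
    constructor
    · rintro ⟨m, hm⟩
      simp only [hT'] at hm
      by_cases hlt : m < n0
      · rw [if_pos hlt] at hm
        simp only [hT, Option.some.injEq] at hm
        exact ⟨m, hlt, hm⟩
      · rw [if_neg hlt] at hm; exact absurd hm (by simp)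
    · rintro ⟨m, hlt, hm⟩
      exact ⟨m, by simp [hT', Set.mem_Iio.mp hlt, hT, hm]⟩
  have hfin : (content T').Finite := by
    rw [hcT']
    exact (Set.finite_Iio n0).image _
  have hsub : content T' ⊆ L := by
    rw [hcT']
    rintro x ⟨m, _, hm⟩
    exact hm ▸ (f m).2
  exact hcaut T' n0 (by rw [hseg, hW]; exact hsub.ssubset_of_ne (fun e => hinf (e ▸ hfin)))
end

section
/- Witness-based learning implies target-cautious learning: if a Gold-style learner h is witness-based on every text of a language L that it explanatorily learns, then h is target-cautious on every text of L. That is, for every text T of L and every n, it is not the case that L is a proper subset of W_{h(T[n])}. -/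
open scoped Classical

/-- Gold-style explanatory learning of `L` on the text `T`. -/
def GExOn (h : List (Option ℕ) → ℕ) (T : Text) (L : Set ℕ) : Prop :=
  ∃ n0 : ℕ, (∀ n ≥ n0, h (seg T n) = h (seg T n0)) ∧ W (h (seg T n0)) = L

/-- The learner `h` is witness-based on the text `T`: every mind change is justified
by a new datum that is in the new hypothesis but not in the old one. -/
def WbOn (h : List (Option ℕ) → ℕ) (T : Text) : Prop :=
  ∀ n m : ℕ, n ≤ m → (∃ k, n ≤ k ∧ k ≤ m ∧ h (seg T n) ≠ h (seg T k)) →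
    ((lcontent (seg T m) ∩ W (h (seg T m))) \ W (h (seg T n))).Nonempty

/-- Witness-based Ex-learning implies target-cautiousness on every text of the language. -/
theorem witness_based_implies_target_cautious
    (h : List (Option ℕ) → ℕ) (L : Set ℕ)
    (hlearn : ∀ T : Text, IsTextOf T L → GExOn h T L)
    (hwb : ∀ T : Text, IsTextOf T L → WbOn h T) :
    ∀ T : Text, IsTextOf T L → ∀ n : ℕ, ¬ L ⊂ W (h (seg T n)) := by
  intro T hT n hsub
  obtain ⟨n0, hconv, hW⟩ := hlearn T hT
  set m := max n n0 with hm
  have hmn0 : m ≥ n0 := le_max_right _ _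
  have hWm : W (h (seg T m)) = L := by rw [hconv m hmn0, hW]
  have hne : h (seg T n) ≠ h (seg T m) := by
    intro he
    apply hsub.2
    rw [he, hWm]
  obtain ⟨x, ⟨hxc, _⟩, hxn⟩ := hwb T hT n m (le_max_left _ _) ⟨m, le_max_left _ _, le_refl _, hne⟩
  apply hxn
  apply hsub.1
  rw [← hT]
  obtain ⟨i, _, hi⟩ := List.mem_map.mp hxc
  exact ⟨i, hi⟩
end

section
/- Syntactic decisiveness normal form: for any Gold-style learner h explanatorily learning a class L of languages while obeying a pseudo-semantic restriction, there exists a learner h' that explanatorily learns L and is syntactically decisive on all texts of languages in L, i.e., h' never returns to a syntactically abandoned hypothesis: for all sequences sigma1 subseteq sigma2 subseteq sigma3 (extension of finite sequences), if h'(sigma1) = h'(sigma3) then h'(sigma1) = h'(sigma2). Moreover h' makes a mind change only when h makes one. -/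
open scoped Classical

/-- Gold-style explanatory learning of `L`. -/
def GEx (h : List (Option ℕ) → ℕ) (L : Set ℕ) : Prop :=
  ∀ T : Text, IsTextOf T L → ∃ n0 : ℕ,
    (∀ n ≥ n0, h (seg T n) = h (seg T n0)) ∧ W (h (seg T n0)) = L

/-- A restriction on (learning sequence, text) pairs is pseudo-semantic if it is
preserved under replacing hypotheses by semantically equivalent ones without
introducing new syntactic mind changes. -/
def PseudoSemantic (δ : (ℕ → ℕ) → Text → Prop) : Prop :=
  ∀ (p p' : ℕ → ℕ) (T : Text), δ p T → (∀ n, W (p' n) = W (p n)) →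
    (∀ n, p' (n + 1) ≠ p' n → p (n + 1) ≠ p n) → δ p' T

/-! ### auxiliary definitions -/

open Nat.Partrec (Code)
open Nat.Partrec.Code

/-- Padding: `padc e k` is an index with the same c.e. set as `e`, from which
both `e` and `k` can be recovered. -/
def padc (e k : ℕ) : ℕ :=
  Encodable.encode (curry ((Denumerable.ofNat Code e).comp Code.right) k)

lemma W_padc (e k : ℕ) : W (padc e k) = W e := by
  ext x
  simp [W, padc, eval_curry, Nat.Partrec.Code.eval, Seq.seq]
  exact Iff.of_eq (congrArg Part.Dom (Part.bind_some x (Denumerable.ofNat Code e).eval))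

lemma padc_inj {e k e' k' : ℕ} (H : padc e k = padc e' k') : e = e' ∧ k = k' := by
  have h1 := Encodable.encode_injective H
  obtain ⟨h2, h3⟩ := curry_inj h1
  injection h2 with h4 _
  refine ⟨?_, h3⟩
  have := congrArg Encodable.encode h4
  simpa using this

lemma padc_comp : Computable₂ padc := by
  have hp : Primrec₂ fun e k => curry ((Denumerable.ofNat Code e).comp Code.right) k :=
    primrec₂_curry.comp
      (primrec₂_comp.comp ((Primrec.ofNat Code).comp Primrec.fst) (Primrec.const Code.right))
      Primrec.snd
  exact (Primrec.encode.comp₂ hp).to_comp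

/-- Prefix-tracking mind-change counter: `(mcP h σ n).1` is the length-`n` prefix
of `σ` and `(mcP h σ n).2` counts the mind changes of `h` along it. -/
def mcP (h : List (Option ℕ) → ℕ) (σ : List (Option ℕ)) : ℕ → List (Option ℕ) × ℕ
  | 0 => ([], 0)
  | n + 1 =>
    let p := mcP h σ n
    let τ := p.1 ++ [(σ[n]?).getD none]
    (τ, p.2 + cond (h τ == h p.1) 0 1)

def mc (h : List (Option ℕ) → ℕ) (σ : List (Option ℕ)) : ℕ := (mcP h σ σ.length).2

/-- Mind-change count of `h` along the text `T`. -/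
def MC (h : List (Option ℕ) → ℕ) (T : Text) : ℕ → ℕ
  | 0 => 0
  | n + 1 => MC h T n + cond (h (seg T (n + 1)) == h (seg T n)) 0 1

lemma seg_succ (T : Text) (n : ℕ) : seg T (n + 1) = seg T n ++ [T n] := by
  simp [seg, List.range_succ]

lemma mcP_seg (h : List (Option ℕ) → ℕ) (T : Text) {m n : ℕ} (hnm : n ≤ m) :
    mcP h (seg T m) n = (seg T n, MC h T n) := by
  induction n with
  | zero => simp [mcP, MC, seg]
  | succ n ih =>
    have hn : n ≤ m := Nat.le_of_succ_le hnm
    have hget : (seg T m)[n]? = some (T n) := by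
      simp [seg, lt_of_lt_of_le (Nat.lt_succ_self n) hnm]
    simp only [mcP, ih hn, hget, MC, Option.getD_some]
    exact Prod.ext (by simp [seg_succ]) (by simp [seg_succ])

lemma mc_seg (h : List (Option ℕ) → ℕ) (T : Text) (n : ℕ) :
    mc h (seg T n) = MC h T n := by
  have hlen : (seg T n).length = n := by simp [seg]
  simp [mc, hlen, mcP_seg h T (le_refl n)]

lemma MC_eq_of_heq (h : List (Option ℕ) → ℕ) (T : Text) (n : ℕ)
    (he : h (seg T (n + 1)) = h (seg T n)) : MC h T (n + 1) = MC h T n := by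
  simp [MC, he]

lemma heq_of_MC_eq (h : List (Option ℕ) → ℕ) (T : Text) (n : ℕ)
    (he : MC h T (n + 1) = MC h T n) : h (seg T (n + 1)) = h (seg T n) := by
  by_contra hne
  have hb : (h (seg T (n + 1)) == h (seg T n)) = false := by simpa using hne
  simp [MC, hb] at he

lemma MC_mono (h : List (Option ℕ) → ℕ) (T : Text) : Monotone (MC h T) := by
  apply monotone_nat_of_le_succ
  intro n
  cases hb : (h (seg T (n + 1)) == h (seg T n)) <;> simp [MC, hb]

lemma h_const_of_MC (h : List (Option ℕ) → ℕ) (T : Text) {n1 n3 : ℕ}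
    (hc : MC h T n3 = MC h T n1) :
    ∀ n, n1 ≤ n → n ≤ n3 → h (seg T n) = h (seg T n1) ∧ MC h T n = MC h T n1 := by
  have sandwich : ∀ n, n1 ≤ n → n ≤ n3 → MC h T n = MC h T n1 := fun n h1 h3 =>
    le_antisymm (hc ▸ MC_mono h T h3) (MC_mono h T h1)
  intro n hn1 hn3
  refine ⟨?_, sandwich n hn1 hn3⟩
  induction n with
  | zero =>
    have : n1 = 0 := Nat.le_zero.mp hn1
    rw [this]
  | succ n ih =>
    rcases Nat.lt_or_ge n1 (n + 1) with hlt | hge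
    · have hn1n : n1 ≤ n := Nat.lt_succ_iff.mp hlt
      have hnn3 : n ≤ n3 := le_trans (Nat.le_succ n) hn3
      have hstep : h (seg T (n + 1)) = h (seg T n) :=
        heq_of_MC_eq h T n
          ((sandwich (n + 1) hn1 hn3).trans (sandwich n hn1n hnn3).symm)
      rw [hstep, ih hn1n hnn3]
    · have : n1 = n + 1 := le_antisymm hn1 hge
      rw [this]

lemma mc_computable {h : List (Option ℕ) → ℕ} (hcomp : Computable h) :
    Computable (mc h) := by
  have hτ : Computable₂ fun (σ : List (Option ℕ)) (p : ℕ × List (Option ℕ) × ℕ) =>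
      p.2.1 ++ [(σ[p.1]?).getD none] :=
    Computable.list_concat.comp
      (Computable.fst.comp (Computable.snd.comp Computable.snd))
      (Computable.option_getD
        (Computable.list_getElem?.comp Computable.fst (Computable.fst.comp Computable.snd))
        (Computable.const none))
  have hbeq : Computable₂ fun (σ : List (Option ℕ)) (p : ℕ × List (Option ℕ) × ℕ) =>
      (h (p.2.1 ++ [(σ[p.1]?).getD none]) == h p.2.1) := by
    have heq : Computable₂ fun (a b : ℕ) => (a == b) := Primrec.beq.to_comp
    exact heq.comp (hcomp.comp hτ)
      (hcomp.comp (Computable.fst.comp (Computable.snd.comp Computable.snd)))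
  have hstep : Computable₂ fun (σ : List (Option ℕ)) (p : ℕ × List (Option ℕ) × ℕ) =>
      ((p.2.1 ++ [(σ[p.1]?).getD none],
        p.2.2 + cond (h (p.2.1 ++ [(σ[p.1]?).getD none]) == h p.2.1) 0 1) :
        List (Option ℕ) × ℕ) := by
    refine Computable.pair hτ ?_
    have hcnd : Computable₂ fun (σ : List (Option ℕ)) (p : ℕ × List (Option ℕ) × ℕ) =>
        cond (h (p.2.1 ++ [(σ[p.1]?).getD none]) == h p.2.1) 0 1 :=
      Computable.cond hbeq (Computable.const 0) (Computable.const 1)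
    exact Primrec.nat_add.to_comp.comp
      (Computable.snd.comp (Computable.snd.comp Computable.snd)) hcnd
  have hmcP : Computable fun σ : List (Option ℕ) => mcP h σ σ.length := by
    have := Computable.nat_rec Computable.list_length
      (Computable.const (([], 0) : List (Option ℕ) × ℕ)) hstep
    refine this.of_eq fun σ => ?_
    have key : ∀ k, (Nat.rec (motive := fun _ => List (Option ℕ) × ℕ) ([], 0)
          (fun y IH => (IH.1 ++ [(σ[y]?).getD none],
            IH.2 + cond (h (IH.1 ++ [(σ[y]?).getD none]) == h IH.1) 0 1)) k)
          = mcP h σ k := by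
      intro k
      induction k with
      | zero => simp [mcP]
      | succ k ihk => simp only [mcP]; rw [ihk]
    exact key σ.length
  exact (Computable.snd.comp hmcP).of_eq fun σ => rfl

/-- Syntactic decisiveness normal form: a Gold-style Ex-learner obeying a
pseudo-semantic restriction can be replaced by one that never returns to a
syntactically abandoned hypothesis on texts of learned languages, making mind
changes only where the original learner does. -/
theorem syntactically_decisive_normal_form
    (δ : (ℕ → ℕ) → Text → Prop) (hδ : PseudoSemantic δ)
    (h : List (Option ℕ) → ℕ) (hcomp : Computable h) (𝓛 : Set (Set ℕ))
    (hlearn : ∀ L ∈ 𝓛, GEx h L)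
    (hrestr : ∀ L ∈ 𝓛, ∀ T : Text, IsTextOf T L → δ (fun n => h (seg T n)) T) :
    ∃ h' : List (Option ℕ) → ℕ, Computable h' ∧
      (∀ L ∈ 𝓛, GEx h' L) ∧
      (∀ L ∈ 𝓛, ∀ T : Text, IsTextOf T L → ∀ n1 n2 n3 : ℕ, n1 ≤ n2 → n2 ≤ n3 →
        h' (seg T n1) = h' (seg T n3) → h' (seg T n1) = h' (seg T n2)) ∧
      (∀ T : Text, ∀ n : ℕ, h' (seg T (n + 1)) ≠ h' (seg T n) →
        h (seg T (n + 1)) ≠ h (seg T n)) := by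
  refine ⟨fun σ => padc (h σ) (mc h σ), ?_, ?_, ?_, ?_⟩
  · exact padc_comp.comp hcomp (mc_computable hcomp)
  · -- GEx
    intro L hL T hT
    obtain ⟨n0, hconv, hW⟩ := hlearn L hL T hT
    have hMC : ∀ n, n0 ≤ n → MC h T n = MC h T n0 := by
      intro n hn
      induction n with
      | zero =>
        have : n0 = 0 := Nat.le_zero.mp hn
        rw [this]
      | succ n ih =>
        rcases Nat.lt_or_ge n0 (n + 1) with hlt | hge
        · have hn0n : n0 ≤ n := Nat.lt_succ_iff.mp hlt
          have he : h (seg T (n + 1)) = h (seg T n) := by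
            rw [hconv (n + 1) (le_trans hn0n (Nat.le_succ n)), hconv n hn0n]
          rw [MC_eq_of_heq h T n he, ih hn0n]
        · have : n0 = n + 1 := le_antisymm hn hge
          rw [this]
    refine ⟨n0, ?_, ?_⟩
    · intro n hn
      simp only [mc_seg]
      rw [hconv n hn, hMC n hn]
    · rw [W_padc]; exact hW
  · -- decisiveness
    intro L hL T hT n1 n2 n3 h12 h23 heq
    simp only [mc_seg] at heq ⊢
    obtain ⟨he13, hc13⟩ := padc_inj heq
    obtain ⟨hh2, hm2⟩ := h_const_of_MC h T hc13.symm n2 h12 h23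
    rw [hh2, hm2]
  · -- mind changes only where h changes
    intro T n hne he
    apply hne
    simp only [mc_seg]
    rw [he, MC_eq_of_heq h T n he]
end

section
/- Strongly locking normal form for partially set-driven learners: if h is a partially set-driven learner that target-cautiously Ex-learns a class L, then the learner h_hat defined by h_hat(D, t) = h(D, 2t) also target-cautiously Ex-learns L, and h_hat is strongly locking: for every L in L and every text T of L there exists n0 such that (content(T[n0]), n0) is a locking information for h_hat on L. -/
open scoped Classical

/-- Reachability order on partially set-driven information: `(D', t')` is reachable
from `(D, t)` by extending the underlying sequence. -/
def PsdLe (D : Finset ℕ) (t : ℕ) (D' : Finset ℕ) (t' : ℕ) : Prop :=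
  D ⊆ D' ∧ t ≤ t' ∧ D'.card - D.card ≤ t' - t

/-- `(D, t)` is a locking information for the partially set-driven learner `h` on `L`. -/
def LockingInfo (h : Finset ℕ → ℕ → ℕ) (L : Set ℕ) (D : Finset ℕ) (t : ℕ) : Prop :=
  ↑D ⊆ L ∧ ∀ (D' : Finset ℕ) (t' : ℕ), PsdLe D t D' t' → ↑D' ⊆ L →
    h D' t' = h D t ∧ W (h D' t') = L

/-- Partially set-driven explanatory learning of `L`. -/
def PsdEx (h : Finset ℕ → ℕ → ℕ) (L : Set ℕ) : Prop :=
  ∀ T : Text, IsTextOf T L → ∃ n0 : ℕ,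
    (∀ n ≥ n0, h (fcontent (seg T n)) n = h (fcontent (seg T n0)) n0) ∧
    W (h (fcontent (seg T n0)) n0) = L

/-- `h` is target-cautious on every text of `L` (as a partially set-driven learner). -/
def PsdCautTar (h : Finset ℕ → ℕ → ℕ) (L : Set ℕ) : Prop :=
  ∀ T : Text, IsTextOf T L → ∀ n : ℕ, ¬ L ⊂ W (h (fcontent (seg T n)) n)

lemma mem_fcontent_seg' {T : Text} {n x : ℕ} :
    x ∈ fcontent (seg T n) ↔ ∃ m < n, T m = some x := by
  simp [fcontent, seg, List.mem_filterMap, List.mem_map]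

lemma fcontent_card_le' (σ : List (Option ℕ)) : (fcontent σ).card ≤ σ.length := by
  calc (fcontent σ).card ≤ (σ.filterMap id).length := List.toFinset_card_le _
    _ ≤ σ.length := List.length_filterMap_le _ _

lemma fcontent_seg_card_le' (T : Text) (n : ℕ) : (fcontent (seg T n)).card ≤ n := by
  have := fcontent_card_le' (seg T n)
  simpa [seg] using this

lemma fcontent_seg_subset' {T : Text} {n n' : ℕ} (hn : n ≤ n') :
    fcontent (seg T n) ⊆ fcontent (seg T n') := by
  intro x hx
  rw [mem_fcontent_seg'] at *
  obtain ⟨m, hm, hx⟩ := hx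
  exact ⟨m, lt_of_lt_of_le hm hn, hx⟩

lemma fcontent_card_diff' {T : Text} {n n' : ℕ} (hn : n ≤ n') :
    (fcontent (seg T n')).card ≤ (fcontent (seg T n)).card + (n' - n) := by
  have : seg T n' = seg T n ++ ((List.range (n' - n)).map (fun i => T (n + i))) := by
    unfold seg
    rw [show n' = n + (n' - n) by omega, List.range_add, List.map_append, List.map_map]
    simp
  rw [this]
  unfold fcontent
  rw [List.filterMap_append, List.toFinset_append]
  calc _ ≤ _ := Finset.card_union_le _ _
    _ ≤ _ := by
        gcongr
        calc ((List.filterMap id ((List.range (n'-n)).map fun i => T (n+i))).toFinset).card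
            ≤ _ := fcontent_card_le' _
          _ ≤ n' - n := by simp

/-- Strongly locking normal form: `h_hat (D, t) = h (D, 2t)` target-cautiously
Ex-learns every language `h` does, and is strongly locking. -/
theorem strongly_locking_normal_form_psd
    (h : Finset ℕ → ℕ → ℕ) (𝓛 : Set (Set ℕ))
    (hlearn : ∀ L ∈ 𝓛, PsdEx h L ∧ PsdCautTar h L)
    (hlock : ∀ L ∈ 𝓛, ∃ (D : Finset ℕ) (t : ℕ), LockingInfo h L D t) :
    ∀ L ∈ 𝓛, PsdEx (fun D t => h D (2 * t)) L ∧ PsdCautTar (fun D t => h D (2 * t)) L ∧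
      ∀ T : Text, IsTextOf T L →
        ∃ n0 : ℕ, LockingInfo (fun D t => h D (2 * t)) L (fcontent (seg T n0)) n0 := by
  intro L hL
  obtain ⟨D, t, hDL, hDlock⟩ := hlock L hL
  -- key: strongly locking
  have key : ∀ T : Text, IsTextOf T L →
      ∃ n0 : ℕ, LockingInfo (fun D t => h D (2 * t)) L (fcontent (seg T n0)) n0 := by
    intro T hT
    classical
    set N := D.sup (fun d => if hd : ∃ m, T m = some d then Nat.find hd + 1 else 0) with hN
    set n0 := max N t with hn0
    have ht : t ≤ n0 := le_max_right _ _
    set E := fcontent (seg T n0) with hE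
    have hDE : D ⊆ E := by
      intro d hd
      have hdL : d ∈ L := hDL hd
      have hdc : ∃ m, T m = some d := by rw [← hT] at hdL; exact hdL
      rw [hE, mem_fcontent_seg']
      refine ⟨Nat.find hdc, ?_, Nat.find_spec hdc⟩
      have h5 := Finset.le_sup
        (f := fun d => if hd' : ∃ m, T m = some d then Nat.find hd' + 1 else 0) hd
      simp only [dif_pos hdc] at h5
      rw [← hN] at h5
      omega
    have hEL : (↑E : Set ℕ) ⊆ L := by
      intro x hx
      rw [Finset.mem_coe, hE, mem_fcontent_seg'] at hx
      obtain ⟨m, _, hm⟩ := hx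
      rw [← hT]; exact ⟨m, hm⟩
    have hcE : E.card ≤ n0 := fcontent_seg_card_le' T n0
    have hcDE : D.card ≤ E.card := Finset.card_le_card hDE
    -- key step: any reachable (E', s') is reachable from (D, t) at time 2s'
    have step : ∀ (E' : Finset ℕ) (s' : ℕ), PsdLe E n0 E' s' → (↑E' : Set ℕ) ⊆ L →
        h E' (2 * s') = h D t ∧ W (h E' (2 * s')) = L := by
      intro E' s' ⟨hsub, hle, hcard⟩ hE'L
      refine hDlock E' (2 * s') ⟨hDE.trans hsub, by omega, ?_⟩ hE'L
      have : E'.card ≤ s' := by omega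
      omega
    refine ⟨n0, hEL, ?_⟩
    intro E' s' hle hE'L
    have h1 := step E' s' hle hE'L
    have h2 := step E n0 ⟨Finset.Subset.refl _, le_refl _, by omega⟩ hEL
    exact ⟨h1.1.trans h2.1.symm, h1.2⟩
  refine ⟨?_, ?_, key⟩
  · -- PsdEx
    intro T hT
    obtain ⟨n0, hEL, hlk⟩ := key T hT
    have hsegL : ∀ n, (↑(fcontent (seg T n)) : Set ℕ) ⊆ L := by
      intro n x hx
      rw [Finset.mem_coe, mem_fcontent_seg'] at hx
      obtain ⟨m, _, hm⟩ := hx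
      rw [← hT]; exact ⟨m, hm⟩
    refine ⟨n0, fun n hn => ?_, ?_⟩
    · have hle : PsdLe (fcontent (seg T n0)) n0 (fcontent (seg T n)) n := by
        refine ⟨fcontent_seg_subset' hn, hn, ?_⟩
        have := fcontent_card_diff' (T := T) hn
        omega
      exact (hlk _ n hle (hsegL n)).1
    · have := hlk _ n0 ⟨Finset.Subset.refl _, le_refl _, by omega⟩ (hsegL n0)
      exact this.2
  · -- PsdCautTar
    intro T hT n
    set T' : Text := fun i => if i % 2 = 0 then T (i / 2) else none with hT'def
    have hT' : IsTextOf T' L := by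
      rw [IsTextOf, ← hT]
      ext x
      constructor
      · rintro ⟨m, hm⟩
        simp only [hT'def] at hm
        by_cases hpar : m % 2 = 0
        · rw [if_pos hpar] at hm; exact ⟨m / 2, hm⟩
        · rw [if_neg hpar] at hm; exact absurd hm (by simp)
      · rintro ⟨m, hm⟩
        exact ⟨2 * m, by simp [hT'def, Nat.mul_div_cancel_left m (by norm_num : 0 < 2), hm]⟩
    have hfc : fcontent (seg T' (2 * n)) = fcontent (seg T n) := by
      ext x
      rw [mem_fcontent_seg', mem_fcontent_seg']
      constructor
      · rintro ⟨m, hmn, hm⟩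
        simp only [hT'def] at hm
        by_cases hpar : m % 2 = 0
        · rw [if_pos hpar] at hm
          exact ⟨m / 2, by omega, hm⟩
        · rw [if_neg hpar] at hm; exact absurd hm (by simp)
      · rintro ⟨m, hmn, hm⟩
        refine ⟨2 * m, by omega, ?_⟩
        simp [hT'def, Nat.mul_div_cancel_left m (by norm_num : 0 < 2), hm]
    have := (hlearn L hL).2 T' hT' (2 * n)
    rw [hfc] at this
    exact this
end

section
/- For consistent learning sequences, semantic witness-basedness and semantic conservativeness coincide: if p is a learning sequence on text T with content(T[n]) subseteq W_{p(n)} for all n, then p is semantically witness-based on T if and only if p is semantically conservative on T. -/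
open scoped Classical

/-- A hypothesis sequence `p` is semantically witness-based on the text `T`. -/
def SemWbSeq (p : ℕ → ℕ) (T : Text) : Prop :=
  ∀ n m : ℕ, n ≤ m → (∃ k, n ≤ k ∧ k ≤ m ∧ W (p n) ≠ W (p k)) →
    ((lcontent (seg T m) ∩ W (p m)) \ W (p n)).Nonempty

/-- A hypothesis sequence `p` is semantically conservative on the text `T`. -/
def SemConvSeq (p : ℕ → ℕ) (T : Text) : Prop :=
  ∀ n m : ℕ, n < m → lcontent (seg T m) ⊆ W (p n) → W (p n) = W (p m)

/-- For consistent learning sequences, semantic witness-basedness and semantic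
conservativeness coincide. -/
theorem consistent_semWb_iff_semConv (p : ℕ → ℕ) (T : Text)
    (hcons : ∀ n : ℕ, lcontent (seg T n) ⊆ W (p n)) :
    SemWbSeq p T ↔ SemConvSeq p T := by
  have hmono : ∀ k m : ℕ, k ≤ m → lcontent (seg T k) ⊆ lcontent (seg T m) := by
    intro k m hkm x hx
    obtain ⟨i, hi, hTi⟩ : ∃ i ∈ List.range k, T i = some x := by
      simpa [lcontent, seg, List.mem_map, eq_comm] using hx
    exact List.mem_map.mpr ⟨i, List.mem_range.mpr (lt_of_lt_of_le (List.mem_range.mp hi) hkm), hTi⟩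
  constructor
  · intro hwb n m hnm hsub
    by_contra hne
    obtain ⟨x, hx, hxn⟩ := hwb n m hnm.le ⟨m, hnm.le, le_refl m, hne⟩
    exact hxn (hsub hx.1)
  · intro hconv n m hnm ⟨k, hnk, hkm, hne⟩
    by_contra hempty
    rw [Set.not_nonempty_iff_eq_empty, Set.diff_eq_empty] at hempty
    have hsub : lcontent (seg T m) ⊆ W (p n) := fun x hx =>
      hempty ⟨hx, hcons m hx⟩
    rcases lt_or_eq_of_le hnk with h | h
    · exact hne (hconv n k h (fun x hx => hsub (hmono k m hkm hx)))
    · exact hne (h ▸ rfl)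
end

section
/- Semantic restrictions admit total learners: for every interaction operator beta in {G, Psd, Sd} and every semantic learning restriction delta, any class of languages learnable by a partial computable beta-learner under delta is learnable by a total computable beta-learner under delta: [R Txt beta delta] = [Txt beta delta]. -/
open scoped Classical

/-- A learning restriction is semantic if it is invariant under replacing hypotheses
by semantically equivalent ones. -/
def Semantic (δ : (ℕ → ℕ) → Text → Prop) : Prop :=
  ∀ (p p' : ℕ → ℕ) (T : Text), δ p T → (∀ n, W (p n) = W (p' n)) → δ p' T

/-- A partial Gold-style learner learns `L` under the restriction `δ`. -/
def LearnsG (h : List (Option ℕ) →. ℕ) (δ : (ℕ → ℕ) → Text → Prop) (L : Set ℕ) : Prop :=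
  ∀ T : Text, IsTextOf T L → ∃ p : ℕ → ℕ,
    (∀ n, h (seg T n) = Part.some (p n)) ∧ δ p T

/-- A partial partially set-driven learner learns `L` under the restriction `δ`. -/
def LearnsPsd (h : Finset ℕ × ℕ →. ℕ) (δ : (ℕ → ℕ) → Text → Prop) (L : Set ℕ) : Prop :=
  ∀ T : Text, IsTextOf T L → ∃ p : ℕ → ℕ,
    (∀ n, h (fcontent (seg T n), n) = Part.some (p n)) ∧ δ p T

/-- A partial set-driven learner learns `L` under the restriction `δ`. -/
def LearnsSd (h : Finset ℕ →. ℕ) (δ : (ℕ → ℕ) → Text → Prop) (L : Set ℕ) : Prop :=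
  ∀ T : Text, IsTextOf T L → ∃ p : ℕ → ℕ,
    (∀ n, h (fcontent (seg T n)) = Part.some (p n)) ∧ δ p T


open Nat.Partrec (Code) in
open Nat.Partrec.Code in
lemma exists_total_equiv {α : Type} [Primcodable α] (h : α →. ℕ) (hp : Partrec h) :
    ∃ k : α → ℕ, Computable k ∧ ∀ a e, h a = Part.some e → W (k a) = W e := by
  set g : α × ℕ →. ℕ :=
    fun p => (h p.1).bind fun e => (Denumerable.ofNat Code e).eval p.2 with hgdef
  have hg : Partrec g :=
    (hp.comp Computable.fst).bind
      (eval_part.comp ((Computable.ofNat Code).comp Computable.snd)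
        (Computable.snd.comp Computable.fst))
  obtain ⟨c, hc⟩ := exists_code.1 hg
  refine ⟨fun a => Encodable.encode (curry c (Encodable.encode a)),
    (Primrec.encode.comp
      (primrec₂_curry.comp (_root_.Primrec.const c) Primrec.encode)).to_comp, ?_⟩
  intro a e hae
  ext x
  have h1 : (Denumerable.ofNat Code
      (Encodable.encode (curry c (Encodable.encode a)))).eval x
      = (Denumerable.ofNat Code e).eval x := by
    rw [Denumerable.ofNat_encode, eval_curry]
    have hpair : Nat.pair (Encodable.encode a) x = Encodable.encode (a, x) := by
      simp [Encodable.encode_prod_val]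
    rw [hpair]
    rw [congrFun hc (Encodable.encode (a, x))]
    simp [Encodable.encodek, hgdef, hae, Part.bind_some]
    exact Part.map_id' (fun n => Encodable.encode_nat n) _
  simp only [W, Set.mem_setOf_eq, h1]

lemma transfer {α : Type} [Primcodable α] (δ : (ℕ → ℕ) → Text → Prop)
    (hδ : Semantic δ) (h : α →. ℕ) (hp : Partrec h) :
    ∃ k : α → ℕ, Computable k ∧ ∀ (s : ℕ → α) (T : Text) (p : ℕ → ℕ),
      (∀ n, h (s n) = Part.some (p n)) → δ p T → δ (fun n => k (s n)) T := by
  obtain ⟨k, hk, hkW⟩ := exists_total_equiv h hp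
  exact ⟨k, hk, fun s T p hsp hd =>
    hδ p (fun n => k (s n)) T hd (fun n => (hkW (s n) (p n) (hsp n)).symm)⟩

/-- Semantic restrictions admit total learners: `[RTxtβδ] = [Txtβδ]` for
`β ∈ {G, Psd, Sd}`. -/
theorem semantic_restrictions_admit_total_learners
    (δ : (ℕ → ℕ) → Text → Prop) (hδ : Semantic δ) (𝓛 : Set (Set ℕ)) :
    ((∃ h : List (Option ℕ) →. ℕ, Partrec h ∧ ∀ L ∈ 𝓛, LearnsG h δ L) →
      ∃ h : List (Option ℕ) → ℕ, Computable h ∧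
        ∀ L ∈ 𝓛, LearnsG (fun σ => Part.some (h σ)) δ L) ∧
    ((∃ h : Finset ℕ × ℕ →. ℕ, Partrec h ∧ ∀ L ∈ 𝓛, LearnsPsd h δ L) →
      ∃ h : Finset ℕ × ℕ → ℕ, Computable h ∧
        ∀ L ∈ 𝓛, LearnsPsd (fun x => Part.some (h x)) δ L) ∧
    ((∃ h : Finset ℕ →. ℕ, Partrec h ∧ ∀ L ∈ 𝓛, LearnsSd h δ L) →
      ∃ h : Finset ℕ → ℕ, Computable h ∧
        ∀ L ∈ 𝓛, LearnsSd (fun D => Part.some (h D)) δ L) := by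
  refine ⟨?_, ?_, ?_⟩
  · rintro ⟨h, hp, hl⟩
    obtain ⟨k, hk, hkd⟩ := transfer δ hδ h hp
    refine ⟨k, hk, fun L hL T hT => ?_⟩
    obtain ⟨p, hp1, hp2⟩ := hl L hL T hT
    exact ⟨fun n => k (seg T n), fun n => rfl, hkd (fun n => seg T n) T p hp1 hp2⟩
  · rintro ⟨h, hp, hl⟩
    obtain ⟨k, hk, hkd⟩ := transfer δ hδ h hp
    refine ⟨k, hk, fun L hL T hT => ?_⟩
    obtain ⟨p, hp1, hp2⟩ := hl L hL T hT
    exact ⟨fun n => k (fcontent (seg T n), n), fun n => rfl,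
      hkd (fun n => (fcontent (seg T n), n)) T p hp1 hp2⟩
  · rintro ⟨h, hp, hl⟩
    obtain ⟨k, hk, hkd⟩ := transfer δ hδ h hp
    refine ⟨k, hk, fun L hL T hT => ?_⟩
    obtain ⟨p, hp1, hp2⟩ := hl L hL T hT
    exact ⟨fun n => k (fcontent (seg T n)), fun n => rfl,
      hkd (fun n => fcontent (seg T n)) T p hp1 hp2⟩
end

section
/- In the witness-based Sd construction: let h be a syntactically decisive set-driven Ex-learner and define p by W_{p(D)} = D union the union over t of: (W_{h(D)}^t restricted to elements > max(D)) enumerated only while D subseteq W_{h(D)}^t and no set D' with D subseteq D' subseteq W_{h(D)}^t causes h to be undefined or to make a mind change within t steps. Then for every language L that h Ex-learns and every locking set D0 of h on L with no elements of L\D0 below max(D0), and every D with D0 subseteq D subseteq L, we have W_{p(D0')} = L where D0' is the minimal prefix (in ascending order) of D on which h makes no further mind change up to D. -/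
open scoped Classical

/-- `Wstep e t`: the finite set enumerated by index `e` within `t` steps. -/
def Wstep (e t : ℕ) : Finset ℕ :=
  (Finset.range t).filter
    (fun x => (Nat.Partrec.Code.evaln t (Denumerable.ofNat Nat.Partrec.Code e) x).isSome)

/-- Set-driven explanatory learning of `L`. -/
def SdEx (h : Finset ℕ → ℕ) (L : Set ℕ) : Prop :=
  ∀ T : Text, IsTextOf T L → ∃ n0 : ℕ,
    (∀ n ≥ n0, h (fcontent (seg T n)) = h (fcontent (seg T n0))) ∧
    W (h (fcontent (seg T n0))) = L

/-- `D0` is a locking set of `h` on `L`. -/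
def LockingSet (h : Finset ℕ → ℕ) (L : Set ℕ) (D0 : Finset ℕ) : Prop :=
  ↑D0 ⊆ L ∧ ∀ D' : Finset ℕ, D0 ⊆ D' → ↑D' ⊆ L → h D' = h D0 ∧ W (h D') = L

/-- The stage `t` is "good" for `D`: `D` is already enumerated, and no superset of
`D` inside the enumerated part causes `h` to make a mind change. -/
def goodStage (h : Finset ℕ → ℕ) (D : Finset ℕ) (t : ℕ) : Prop :=
  ↑D ⊆ (Wstep (h D) t : Set ℕ) ∧
  ∀ D' : Finset ℕ, D ⊆ D' → D' ⊆ Wstep (h D) t → h D' = h D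

/-- The set `W_{p(D)}`: `D` together with the elements above `max D` enumerated by
`h D` at good stages. -/
def pSet (h : Finset ℕ → ℕ) (D : Finset ℕ) : Set ℕ :=
  ↑D ∪ {x | ∃ t : ℕ, goodStage h D t ∧ x ∈ Wstep (h D) t ∧ ∀ y ∈ D, y < x}

/-- The set of the `k` smallest elements of `D`. -/
def takeSmall (D : Finset ℕ) (k : ℕ) : Finset ℕ :=
  ((D.sort (· ≤ ·)).take k).toFinset

/-- `k_D`: the least `k` such that `h` makes no mind change between `D[k]` and `D`. -/
noncomputable def kMin (h : Finset ℕ → ℕ) (D : Finset ℕ) : ℕ :=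
  sInf {k : ℕ | ∀ D' : Finset ℕ, takeSmall D k ⊆ D' → D' ⊆ D → h D' = h D}


lemma wstep_subset_W (e t : ℕ) {x : ℕ} (hx : x ∈ Wstep e t) : x ∈ W e := by
  simp only [Wstep, Finset.mem_filter, Finset.mem_range] at hx
  obtain ⟨-, hs⟩ := hx
  obtain ⟨v, hv⟩ := Option.isSome_iff_exists.mp hs
  exact Part.dom_iff_mem.mpr ⟨v, Nat.Partrec.Code.evaln_sound hv⟩

lemma wstep_mono {e t t' : ℕ} (htt : t ≤ t') : Wstep e t ⊆ Wstep e t' := by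
  intro x hx
  simp only [Wstep, Finset.mem_filter, Finset.mem_range] at hx ⊢
  obtain ⟨hlt, hs⟩ := hx
  obtain ⟨v, hv⟩ := Option.isSome_iff_exists.mp hs
  exact ⟨lt_of_lt_of_le hlt htt,
    Option.isSome_iff_exists.mpr ⟨v, Nat.Partrec.Code.evaln_mono htt hv⟩⟩

lemma exists_wstep {e x : ℕ} (hx : x ∈ W e) : ∃ t, x ∈ Wstep e t := by
  obtain ⟨v, hv⟩ := Part.dom_iff_mem.mp hx
  obtain ⟨k, hk⟩ := Nat.Partrec.Code.evaln_complete.mp hv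
  refine ⟨k, ?_⟩
  simp only [Wstep, Finset.mem_filter, Finset.mem_range]
  exact ⟨Nat.Partrec.Code.evaln_bound hk, Option.isSome_iff_exists.mpr ⟨v, hk⟩⟩

lemma finset_subset_wstep {e : ℕ} (D : Finset ℕ) (hD : ↑D ⊆ W e) : ∃ t, D ⊆ Wstep e t := by
  classical
  induction D using Finset.induction_on with
  | empty => exact ⟨0, by simp⟩
  | @insert a s has ih =>
    obtain ⟨t1, ht1⟩ := ih (fun y hy => hD (by
      simp only [Finset.coe_insert, Set.mem_insert_iff]
      exact Or.inr (Finset.mem_coe.mp hy)))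
    obtain ⟨t2, ht2⟩ := exists_wstep (hD (show a ∈ (↑(insert a s) : Set ℕ) by simp))
    refine ⟨max t1 t2, fun y hy => ?_⟩
    rcases Finset.mem_insert.mp hy with rfl | hy
    · exact wstep_mono (le_max_right _ _) ht2
    · exact wstep_mono (le_max_left _ _) (ht1 hy)

lemma takeSmall_subset (D : Finset ℕ) (k : ℕ) : takeSmall D k ⊆ D := by
  intro x hx
  simp only [takeSmall, List.mem_toFinset] at hx
  exact (Finset.mem_sort _).mp (List.mem_of_mem_take hx)

lemma takeSmall_mono (D : Finset ℕ) {k k' : ℕ} (hk : k ≤ k') :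
    takeSmall D k ⊆ takeSmall D k' := by
  intro x hx
  simp only [takeSmall, List.mem_toFinset] at hx ⊢
  have : List.take k (D.sort (· ≤ ·)) =
      List.take k (List.take k' (D.sort (· ≤ ·))) := by
    rw [List.take_take, min_eq_left hk]
  rw [this] at hx
  exact List.mem_of_mem_take hx

lemma takeSmall_card (D : Finset ℕ) : takeSmall D D.card = D := by
  simp [takeSmall, List.take_of_length_le (le_of_eq (Finset.length_sort _)),
    Finset.sort_toFinset]

lemma lt_of_mem_takeSmall {D : Finset ℕ} {k x : ℕ} (hxD : x ∈ D) (hx : x ∉ takeSmall D k) :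
    ∀ y ∈ takeSmall D k, y < x := by
  intro y hy
  have hs : List.Pairwise (· < ·) (D.sort (· ≤ ·)) := (Finset.sortedLT_sort D).pairwise
  have hsplit := (List.take_append_drop k (D.sort (· ≤ ·))).symm
  have hxl : x ∈ (D.sort (· ≤ ·)) := (Finset.mem_sort _).mpr hxD
  rw [hsplit] at hxl
  have hx' : x ∈ (D.sort (· ≤ ·)).drop k := by
    rcases List.mem_append.mp hxl with hxt | hxd
    · exact absurd (List.mem_toFinset.mpr hxt) hx
    · exact hxd
  rw [hsplit] at hs
  simp only [takeSmall, List.mem_toFinset] at hy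
  exact (List.pairwise_append.mp hs).2.2 y hy x hx'

instance : IsAntisymm ℕ (· < ·) := ⟨fun _ _ h1 h2 => absurd h2 (asymm h1)⟩

lemma takeSmall_eq_of_initial {D D0 : Finset ℕ} (hsub : D0 ⊆ D)
    (hcross : ∀ x ∈ D, x ∉ D0 → ∀ y ∈ D0, y < x) :
    takeSmall D D0.card = D0 := by
  classical
  have hsplit : D.sort (· ≤ ·) = D0.sort (· ≤ ·) ++ (D \ D0).sort (· ≤ ·) := by
    refine (fun hp h1 h2 => List.Perm.eq_of_pairwise' (r := (· < ·)) h1 h2 hp) ?_ ?_ ?_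
    · rw [← Multiset.coe_eq_coe]
      show (↑(D.sort (· ≤ ·)) : Multiset ℕ) = ↑(D0.sort (· ≤ ·)) + ↑((D \ D0).sort (· ≤ ·))
      rw [Finset.sort_eq, Finset.sort_eq, Finset.sort_eq, Finset.sdiff_val]
      exact (add_tsub_cancel_of_le (Finset.val_le_iff.mpr hsub)).symm
    · exact (Finset.sortedLT_sort D).pairwise
    · rw [List.pairwise_append]
      refine ⟨(Finset.sortedLT_sort D0).pairwise, (Finset.sortedLT_sort _).pairwise, fun y hy x hx => ?_⟩
      have hy' : y ∈ D0 := (Finset.mem_sort _).mp hy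
      have hx' : x ∈ D \ D0 := (Finset.mem_sort _).mp hx
      exact hcross x (Finset.mem_sdiff.mp hx').1 (Finset.mem_sdiff.mp hx').2 y hy'
  rw [takeSmall, hsplit, ← Finset.length_sort (α := ℕ) (· ≤ ·) (s := D0),
    List.take_left, Finset.sort_toFinset]

/-- Correctness of the poisoned hypotheses in the witness-based Sd-construction:
above a suitable locking set, the hypothesis `p(D[k_D])` enumerates exactly `L`. -/
theorem witness_based_sd_construction_correct
    (h : Finset ℕ → ℕ) (p : Finset ℕ → ℕ)
    (hp : ∀ D : Finset ℕ, W (p D) = pSet h D)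
    (hdec : ∀ D1 D2 D3 : Finset ℕ, D1 ⊆ D2 → D2 ⊆ D3 → h D1 = h D3 → h D1 = h D2)
    (L : Set ℕ) (hlearn : SdEx h L)
    (D0 : Finset ℕ) (hD0 : LockingSet h L D0)
    (hmin : ∀ x ∈ L, x ∉ D0 → ∀ y ∈ D0, y < x) :
    ∀ D : Finset ℕ, D0 ⊆ D → ↑D ⊆ L → W (p (takeSmall D (kMin h D))) = L := by
  intro D hD0D hDL
  classical
  obtain ⟨hD0L, hLock⟩ := hD0
  obtain ⟨hhD, hWD⟩ := hLock D hD0D hDL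
  have hcard : D.card ∈ {k : ℕ | ∀ D' : Finset ℕ, takeSmall D k ⊆ D' → D' ⊆ D → h D' = h D} := by
    intro D' h1 h2
    rw [takeSmall_card] at h1
    rw [subset_antisymm h2 h1]
  have hkmem : ∀ D' : Finset ℕ, takeSmall D (kMin h D) ⊆ D' → D' ⊆ D → h D' = h D :=
    Nat.sInf_mem ⟨D.card, hcard⟩
  have hcross : ∀ x ∈ D, x ∉ D0 → ∀ y ∈ D0, y < x := fun x hx hx0 => hmin x (hDL hx) hx0
  have htake0 : takeSmall D D0.card = D0 := takeSmall_eq_of_initial hD0D hcross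
  have hcard0 : D0.card ∈ {k : ℕ | ∀ D' : Finset ℕ, takeSmall D k ⊆ D' → D' ⊆ D → h D' = h D} := by
    intro D' h1 h2
    rw [htake0] at h1
    rw [(hLock D' h1 (Set.Subset.trans (Finset.coe_subset.mpr h2) hDL)).1, ← hhD]
  set E := takeSmall D (kMin h D) with hEdef
  have hED : E ⊆ D := takeSmall_subset D _
  have hED0 : E ⊆ D0 := by
    rw [← htake0]
    exact takeSmall_mono D (Nat.sInf_le hcard0)
  have hhE : h E = h D := hkmem E (Finset.Subset.refl E) hED
  have hhE0 : h E = h D0 := hhE.trans hhD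
  have hWE : W (h E) = L := by rw [hhE, hWD]
  rw [hp]
  apply Set.Subset.antisymm
  · rintro x (hx | ⟨t, _, hxt, -⟩)
    · exact hDL (Finset.coe_subset.mpr hED hx)
    · rw [← hWE]; exact wstep_subset_W _ _ hxt
  · intro x hxL
    by_cases hxE : x ∈ E
    · exact Or.inl (Finset.mem_coe.mpr hxE)
    right
    have hxgt : ∀ y ∈ E, y < x := by
      by_cases hx0 : x ∈ D0
      · exact lt_of_mem_takeSmall (hD0D hx0) hxE
      · exact fun y hy => hmin x hxL hx0 y (hED0 hy)
    obtain ⟨t1, ht1⟩ := exists_wstep (show x ∈ W (h E) by rw [hWE]; exact hxL)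
    obtain ⟨t2, ht2⟩ := finset_subset_wstep E
      (show ↑E ⊆ W (h E) by rw [hWE]; exact fun y hy => hDL (Finset.coe_subset.mpr hED hy))
    refine ⟨max t1 t2, ⟨?_, ?_⟩, wstep_mono (le_max_left _ _) ht1, hxgt⟩
    · exact fun y hy => Finset.mem_coe.mpr (wstep_mono (le_max_right _ _) (ht2 hy))
    · intro D' hED' hD'W
      have hD'L : ↑D' ⊆ L := by
        rw [← hWE]
        exact fun y hy => wstep_subset_W _ _ (hD'W hy)
      have h1 : h (D' ∪ D0) = h D0 :=
        (hLock (D' ∪ D0) Finset.subset_union_right (by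
          rw [Finset.coe_union]; exact Set.union_subset hD'L hD0L)).1
      exact (hdec E D' (D' ∪ D0) hED' Finset.subset_union_left (by rw [hhE0, ← h1])).symm
end

section
/- Every Blum-Blum locking argument for set-driven learners: if a set-driven learner h Ex-learns an infinite language L, then there exists a finite locking set D0 subseteq L for h on L, i.e., for all finite D' with D0 subseteq D' subseteq L, h(D') = h(D0) and W_{h(D0)} = L. -/
open scoped Classical

namespace SDaux

lemma mem_fcontent {x : ℕ} {σ : List (Option ℕ)} : x ∈ fcontent σ ↔ some x ∈ σ := by
  simp [fcontent, List.mem_filterMap]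

lemma fcontent_append (a b : List (Option ℕ)) :
    fcontent (a ++ b) = fcontent a ∪ fcontent b := by
  ext x; simp [mem_fcontent]

lemma fcontent_map_some (l : List ℕ) : fcontent (l.map some) = l.toFinset := by
  ext x; simp [mem_fcontent]

/-- The block appended at stage `k` when the current content is `D`. -/
noncomputable def next (g : Finset ℕ → Finset ℕ) (L : Set ℕ) (k : ℕ) (D : Finset ℕ) :
    List (Option ℕ) :=
  ((g D).toList.map some) ++ [if k ∈ L then some k else none]

/-- Finite approximations of the adaptive text. -/
noncomputable def sig (g : Finset ℕ → Finset ℕ) (L : Set ℕ) : ℕ → List (Option ℕ)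
  | 0 => []
  | k + 1 => sig g L k ++ next g L k (fcontent (sig g L k))

/-- The adaptive text. -/
noncomputable def T (g : Finset ℕ → Finset ℕ) (L : Set ℕ) : Text :=
  fun n => (sig g L (n + 1)).getD n none

variable (g : Finset ℕ → Finset ℕ) (L : Set ℕ)

lemma length_sig (k : ℕ) : k ≤ (sig g L k).length := by
  induction k with
  | zero => simp
  | succ k ih =>
    have : 1 ≤ (next g L k (fcontent (sig g L k))).length := by
      simp [next]
    simp only [sig, List.length_append]
    omega

lemma sig_prefix_succ (k : ℕ) : sig g L k <+: sig g L (k + 1) :=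
  ⟨_, rfl⟩

lemma sig_prefix {k m : ℕ} (hk : k ≤ m) : sig g L k <+: sig g L m := by
  induction m with
  | zero => cases Nat.le_zero.mp hk; exact List.prefix_rfl
  | succ m ih =>
    rcases Nat.lt_or_ge k (m + 1) with hlt | hge
    · exact (ih (Nat.lt_succ_iff.mp hlt)).trans (sig_prefix_succ g L m)
    · have : k = m + 1 := le_antisymm hk hge
      subst this; exact List.prefix_rfl

lemma T_eq_sig {m i : ℕ} (hi : i < (sig g L m).length) :
    T g L i = (sig g L m)[i] := by
  have hi1 : i < (sig g L (i + 1)).length := lt_of_lt_of_le (Nat.lt_succ_self i) (length_sig g L (i + 1))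
  have : T g L i = (sig g L (i + 1))[i] := List.getD_eq_getElem _ _ hi1
  rw [this]
  rcases le_total (i + 1) m with hle | hle
  · exact (sig_prefix g L hle).getElem hi1
  · exact ((sig_prefix g L hle).getElem hi).symm

lemma seg_eq_of_prefix {ρ : List (Option ℕ)} {m : ℕ} (hp : ρ <+: sig g L m) :
    seg (T g L) ρ.length = ρ := by
  apply List.ext_getElem
  · simp [seg]
  · intro i hi hi'
    have hilt : i < ρ.length := hi'
    have hilt2 : i < (sig g L m).length := lt_of_lt_of_le hilt hp.length_le
    have h1 : (seg (T g L) ρ.length)[i] = T g L i := by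
      simp [seg]
    rw [h1, T_eq_sig g L hilt2, hp.getElem hilt]

lemma sig_content_sub (hg : ∀ D : Finset ℕ, ↑(g D) ⊆ L) (k : ℕ) {x : ℕ}
    (hx : some x ∈ sig g L k) : x ∈ L := by
  induction k with
  | zero => simp [sig] at hx
  | succ k ih =>
    simp only [sig, List.mem_append] at hx
    rcases hx with hx | hx
    · exact ih hx
    · simp only [next, List.mem_append, List.mem_map, List.mem_singleton] at hx
      rcases hx with ⟨y, hy, hyx⟩ | hx
      · obtain rfl : y = x := Option.some_injective _ hyx
        exact hg _ (by simpa using hy)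
      · by_cases hkL : k ∈ L
        · rw [if_pos hkL] at hx
          obtain rfl : k = x := Option.some_injective _ hx.symm
          exact hkL
        · rw [if_neg hkL] at hx; exact absurd hx.symm (by simp)

lemma T_is_text (hg : ∀ D : Finset ℕ, ↑(g D) ⊆ L) : IsTextOf (T g L) L := by
  unfold IsTextOf content
  ext x
  simp only [Set.mem_setOf_eq]
  constructor
  · rintro ⟨n, hn⟩
    have hn1 : n < (sig g L (n + 1)).length :=
      lt_of_lt_of_le (Nat.lt_succ_self n) (length_sig g L (n + 1))
    have : T g L n = (sig g L (n + 1))[n] := T_eq_sig g L hn1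
    rw [this] at hn
    exact sig_content_sub g L hg (n + 1) (hn ▸ List.getElem_mem hn1)
  · intro hx
    have hmem : some x ∈ sig g L (x + 1) := by
      simp only [sig, List.mem_append, next, List.mem_singleton]
      right; right
      rw [if_pos hx]
    obtain ⟨i, hi, hix⟩ := List.getElem_of_mem hmem
    exact ⟨i, (T_eq_sig g L hi).trans hix⟩

end SDaux

/-- Blum–Blum locking sets for set-driven learners: a set-driven learner Ex-learning
an infinite language has a finite locking set for it. -/
theorem sd_locking_set_exists (h : Finset ℕ → ℕ) (L : Set ℕ)
    (hinf : L.Infinite) (hlearn : SdEx h L) :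
    ∃ D0 : Finset ℕ, ↑D0 ⊆ L ∧ W (h D0) = L ∧
      ∀ D' : Finset ℕ, D0 ⊆ D' → ↑D' ⊆ L → h D' = h D0 := by
  by_contra hcon
  push_neg at hcon
  -- hcon : ∀ D0, ↑D0 ⊆ L → W (h D0) = L → ∃ D', D0 ⊆ D' ∧ ↑D' ⊆ L ∧ h D' ≠ h D0
  -- the "next bad set" function
  let g : Finset ℕ → Finset ℕ := fun D =>
    if hD : (↑D : Set ℕ) ⊆ L ∧ W (h D) = L then (hcon D hD.1 hD.2).choose else ∅
  have hg : ∀ D : Finset ℕ, (↑(g D) : Set ℕ) ⊆ L := by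
    intro D
    by_cases hD : (↑D : Set ℕ) ⊆ L ∧ W (h D) = L
    · simp only [g, dif_pos hD]
      exact (hcon D hD.1 hD.2).choose_spec.2.1
    · simp [g, dif_neg hD]
  have hgsub : ∀ D : Finset ℕ, (hD : (↑D : Set ℕ) ⊆ L ∧ W (h D) = L) → D ⊆ g D := by
    intro D hD
    simp only [g, dif_pos hD]
    exact (hcon D hD.1 hD.2).choose_spec.1
  have hgne : ∀ D : Finset ℕ, (hD : (↑D : Set ℕ) ⊆ L ∧ W (h D) = L) → h (g D) ≠ h D := by
    intro D hD
    simp only [g, dif_pos hD]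
    exact (hcon D hD.1 hD.2).choose_spec.2.2
  -- apply learning on the adaptive text
  set T := SDaux.T g L with hT
  obtain ⟨n0, hconv, hW⟩ := hlearn T (SDaux.T_is_text g L hg)
  set e := h (fcontent (seg T n0)) with he
  -- work at stage k = n0
  set k := n0 with hk
  set ρ := SDaux.sig g L k with hρ
  have hlen : n0 ≤ ρ.length := SDaux.length_sig g L k
  set D := fcontent ρ with hD
  have hsegρ : seg T ρ.length = ρ := SDaux.seg_eq_of_prefix g L List.prefix_rfl
  have hDe : h D = e := by
    have := hconv ρ.length hlen
    rwa [hsegρ, ← hD] at this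
  have hDL : (↑D : Set ℕ) ⊆ L := by
    intro x hx
    exact SDaux.sig_content_sub g L hg k (SDaux.mem_fcontent.mp hx)
  have hWD : W (h D) = L := by rw [hDe]; exact hW
  have hDpair : (↑D : Set ℕ) ⊆ L ∧ W (h D) = L := ⟨hDL, hWD⟩
  -- the segment ρ ++ (g D as list) is a prefix of sig (k+1)
  set τ := ρ ++ ((g D).toList.map some) with hτ
  have hτpre : τ <+: SDaux.sig g L (k + 1) := by
    refine ⟨[if k ∈ L then some k else none], ?_⟩
    simp [SDaux.sig, SDaux.next, hτ, hρ, hD]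
  have hsegτ : seg T τ.length = τ := SDaux.seg_eq_of_prefix g L hτpre
  have hτcontent : fcontent τ = g D := by
    rw [hτ, SDaux.fcontent_append, SDaux.fcontent_map_some, Finset.toList_toFinset]
    exact Finset.union_eq_right.mpr (hgsub D hDpair)
  have hτlen : n0 ≤ τ.length := by
    rw [hτ]; simp only [List.length_append]; omega
  have : h (fcontent (seg T τ.length)) = e := hconv τ.length hτlen
  rw [hsegτ, hτcontent] at this
  exact hgne D hDpair (this.trans hDe.symm)
end
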